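/- For every real ε with 0 < ε ≤ 1, the double series ∑_{k=1}^∞ ∑_{l=1}^∞ |C(1/2, k)| |C(1/2, l)| ε^{k+l−1} converges, equals (1 − √(1−ε))²/ε, and is bounded above by ε. -/

import Mathlib

/-- The generalized binomial coefficient `C(1/2, k) = (1/2)(1/2−1)⋯(1/2−k+1)/k!`. -/
noncomputable def halfChoose (k : ℕ) : ℝ :=
  (∏ j ∈ Finset.range k, ((1 : ℝ) / 2 - j)) / k.factorial

lemma halfChoose_succ (k : ℕ) :
    halfChoose (k + 1) = halfChoose k * ((1 : ℝ) / 2 - k) / (k + 1) := by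
  have hk : (k.factorial : ℝ) ≠ 0 := Nat.cast_ne_zero.mpr k.factorial_ne_zero
  have hk1 : ((k : ℝ) + 1) ≠ 0 := by positivity
  simp only [halfChoose, Finset.prod_range_succ, Nat.factorial_succ]
  push_cast
  rw [div_mul_eq_mul_div, div_div, mul_comm ((k:ℝ) + 1) (k.factorial : ℝ)]

lemma abs_halfChoose (k : ℕ) :
    |halfChoose (k + 1)| = (Nat.centralBinom k : ℝ) / ((k + 1) * 2 ^ (2 * k + 1)) := by
  induction k with
  | zero => norm_num [halfChoose, Nat.centralBinom_zero]
  | succ k ih =>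
    have h1 : |halfChoose (k + 2)| = |halfChoose (k + 1)| * ((k : ℝ) + 1 / 2) / (k + 2) := by
      rw [show k + 2 = (k + 1) + 1 by ring, halfChoose_succ (k + 1)]
      rw [abs_div, abs_mul]
      push_cast
      rw [show |(1 : ℝ) / 2 - (k + 1)| = (k : ℝ) + 1 / 2 by
        rw [abs_of_nonpos (by linarith [Nat.cast_nonneg (α := ℝ) k])]; ring]
      rw [abs_of_nonneg (by positivity : (0:ℝ) ≤ (k : ℝ) + 1 + 1)]
      ring_nf
    have hrec : ((k : ℝ) + 1) * (Nat.centralBinom (k + 1) : ℝ)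
        = 2 * (2 * k + 1) * (Nat.centralBinom k : ℝ) := by
      exact_mod_cast congrArg (Nat.cast : ℕ → ℝ) (Nat.succ_mul_centralBinom_succ k)
    rw [h1, ih]
    have h2 : ((k : ℝ) + 1) ≠ 0 := by positivity
    have h3 : ((k : ℝ) + 2) ≠ 0 := by positivity
    have h4 : (2 : ℝ) ^ (2 * k + 1) ≠ 0 := by positivity
    have h5 : (2 : ℝ) ^ (2 * (k + 1) + 1) = 4 * 2 ^ (2 * k + 1) := by
      rw [show 2 * (k + 1) + 1 = (2 * k + 1) + 2 by ring, pow_add]; ring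
    push_cast
    rw [h5]
    field_simp
    linear_combination (-2 * ((k:ℝ) + 2)) * hrec

lemma abs_halfChoose_catalan (k : ℕ) :
    |halfChoose (k + 1)| = (catalan k : ℝ) / 2 ^ (2 * k + 1) := by
  rw [abs_halfChoose]
  have h : ((k : ℝ) + 1) * (catalan k : ℝ) = (Nat.centralBinom k : ℝ) := by
    exact_mod_cast congrArg (Nat.cast : ℕ → ℝ) (succ_mul_catalan_eq_centralBinom k)
  rw [← h]
  have h2 : ((k : ℝ) + 1) ≠ 0 := by positivity
  field_simp

lemma sum_abs_halfChoose (n : ℕ) :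
    ∑ k ∈ Finset.range n, |halfChoose (k + 1)|
      = 1 - (Nat.centralBinom n : ℝ) / 4 ^ n := by
  induction n with
  | zero => simp [Nat.centralBinom_zero]
  | succ n ih =>
    rw [Finset.sum_range_succ, ih, abs_halfChoose]
    have hrec : ((n : ℝ) + 1) * (Nat.centralBinom (n + 1) : ℝ)
        = 2 * (2 * n + 1) * (Nat.centralBinom n : ℝ) := by
      exact_mod_cast congrArg (Nat.cast : ℕ → ℝ) (Nat.succ_mul_centralBinom_succ n)
    have h2 : ((n : ℝ) + 1) ≠ 0 := by positivity
    have h3 : (4 : ℝ) ^ n ≠ 0 := by positivity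
    have h4 : (2 : ℝ) ^ (2 * n + 1) = 2 * 4 ^ n := by
      rw [show (4 : ℝ) = 2 ^ 2 by norm_num, ← pow_mul, pow_add]; ring
    have h5 : (4 : ℝ) ^ (n + 1) = 4 * 4 ^ n := by rw [pow_succ]; ring
    rw [h4, h5]
    field_simp
    linear_combination 2 * hrec

/-- For `0 < ε ≤ 1`, the double series
`∑_{k,l≥1} |C(1/2,k)||C(1/2,l)| ε^{k+l−1}` converges, equals `(1 − √(1−ε))²/ε`, and is at
most `ε`. -/
theorem stmt_11 (ε : ℝ) (hε0 : 0 < ε) (hε1 : ε ≤ 1) :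
    HasSum (fun p : ℕ × ℕ =>
        |halfChoose (p.1 + 1)| * |halfChoose (p.2 + 1)| * ε ^ (p.1 + p.2 + 1))
      ((1 - Real.sqrt (1 - ε)) ^ 2 / ε) ∧
    (1 - Real.sqrt (1 - ε)) ^ 2 / ε ≤ ε := by
  set s := Real.sqrt (1 - ε) with hs_def
  have hs0 : 0 ≤ s := Real.sqrt_nonneg _
  have hsq : s ^ 2 = 1 - ε := Real.sq_sqrt (by linarith)
  set g : ℕ → ℝ := fun k => |halfChoose (k + 1)| * ε ^ (k + 1) with hg_def
  have hg_nonneg : ∀ k, 0 ≤ g k := fun k => by positivity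
  have hεpow : ∀ k : ℕ, ε ^ (k + 1) ≤ 1 := fun k =>
    pow_le_one₀ (le_of_lt hε0) hε1
  have hg_le : ∀ k, g k ≤ |halfChoose (k + 1)| := fun k => by
    have := hεpow k
    have h := abs_nonneg (halfChoose (k + 1))
    calc g k = |halfChoose (k + 1)| * ε ^ (k + 1) := rfl
      _ ≤ |halfChoose (k + 1)| * 1 :=
          mul_le_mul_of_nonneg_left (hεpow k) (abs_nonneg _)
      _ = |halfChoose (k + 1)| := mul_one _
  have hsumrange : ∀ n, ∑ k ∈ Finset.range n, g k ≤ 1 := by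
    intro n
    calc ∑ k ∈ Finset.range n, g k ≤ ∑ k ∈ Finset.range n, |halfChoose (k + 1)| :=
          Finset.sum_le_sum fun k _ => hg_le k
      _ = 1 - (Nat.centralBinom n : ℝ) / 4 ^ n := sum_abs_halfChoose n
      _ ≤ 1 := by
          have : (0:ℝ) ≤ (Nat.centralBinom n : ℝ) / 4 ^ n := by positivity
          linarith
  have hg_sum : Summable g := summable_of_sum_range_le hg_nonneg hsumrange
  set f := ∑' k, g k with hf_def
  have hf_le : f ≤ 1 := Real.tsum_le_of_sum_range_le hg_nonneg hsumrange
  have hf0 : 0 ≤ f := tsum_nonneg hg_nonneg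
  have hg_norm : Summable fun k => ‖g k‖ := by
    simpa [Real.norm_of_nonneg (hg_nonneg _)] using hg_sum
  -- Cauchy product coefficient identity
  have key : ∀ n : ℕ, ∑ kl ∈ Finset.HasAntidiagonal.antidiagonal n, g kl.1 * g kl.2 = 2 * g (n + 1) := by
    intro n
    have h1 : ∀ kl ∈ Finset.HasAntidiagonal.antidiagonal n,
        g kl.1 * g kl.2 = ((catalan kl.1 * catalan kl.2 : ℕ) : ℝ) * (ε ^ (n + 2) / 2 ^ (2 * n + 2)) := by
      rintro ⟨i, j⟩ hij
      rw [Finset.HasAntidiagonal.mem_antidiagonal] at hij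
      simp only [hg_def]
      rw [abs_halfChoose_catalan, abs_halfChoose_catalan]
      have hεp : ε ^ (i + 1) * ε ^ (j + 1) = ε ^ (n + 2) := by
        rw [← pow_add]; congr 1; omega
      have h2p : (2:ℝ) ^ (2 * i + 1) * 2 ^ (2 * j + 1) = 2 ^ (2 * n + 2) := by
        rw [← pow_add]; congr 1; omega
      push_cast
      field_simp
      rw [← hεp, ← h2p]
      ring
    rw [Finset.sum_congr rfl h1, ← Finset.sum_mul, ← Nat.cast_sum]
    rw [show ∑ kl ∈ Finset.HasAntidiagonal.antidiagonal n, catalan kl.1 * catalan kl.2 = catalan (n + 1) from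
      (catalan_succ' n).symm]
    simp only [hg_def]
    rw [abs_halfChoose_catalan]
    have h2p : (2:ℝ) ^ (2 * (n + 1) + 1) = 2 * 2 ^ (2 * n + 2) := by
      rw [show 2 * (n + 1) + 1 = (2 * n + 2) + 1 by ring, pow_succ]; ring
    rw [h2p]
    have : (2:ℝ) ^ (2 * n + 2) ≠ 0 := by positivity
    field_simp
  -- the quadratic equation f^2 = 2f - ε
  have hcauchy : f * f = ∑' n, ∑ kl ∈ Finset.HasAntidiagonal.antidiagonal n, g kl.1 * g kl.2 :=
    tsum_mul_tsum_eq_tsum_sum_antidiagonal_of_summable_norm hg_norm hg_norm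
  have hg0 : g 0 = ε / 2 := by
    simp only [hg_def]
    rw [show |halfChoose (0 + 1)| = 1 / 2 by
      rw [abs_halfChoose]; simp [Nat.centralBinom]]
    ring
  have hquad : f * f = 2 * f - ε := by
    rw [hcauchy]
    have h1 : ∑' n, ∑ kl ∈ Finset.HasAntidiagonal.antidiagonal n, g kl.1 * g kl.2 = ∑' n, 2 * g (n + 1) := by
      exact tsum_congr key
    rw [h1, tsum_mul_left]
    have h2 : ∑' n, g (n + 1) = f - g 0 := by
      have := Summable.tsum_eq_zero_add hg_sum
      rw [← hf_def] at this
      linarith [this]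
    rw [h2, hg0]
    ring
  have hfs : f = 1 - s := by
    have h1 : (1 - f) ^ 2 = 1 - ε := by nlinarith [hquad]
    have h2 : s = 1 - f := by
      rw [hs_def, ← h1, Real.sqrt_sq (by linarith)]
    linarith
  have hfhasSum : HasSum g f := hg_sum.hasSum
  have hmulsum : Summable fun p : ℕ × ℕ => g p.1 * g p.2 :=
    Summable.mul_of_nonneg hg_sum hg_sum hg_nonneg hg_nonneg
  have hdouble : HasSum (fun p : ℕ × ℕ => g p.1 * g p.2) (f * f) :=
    hfhasSum.mul hfhasSum hmulsum
  have hdiv : HasSum (fun p : ℕ × ℕ => g p.1 * g p.2 / ε) (f * f / ε) :=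
    hdouble.div_const ε
  have hfun : (fun p : ℕ × ℕ =>
      |halfChoose (p.1 + 1)| * |halfChoose (p.2 + 1)| * ε ^ (p.1 + p.2 + 1))
      = fun p : ℕ × ℕ => g p.1 * g p.2 / ε := by
    funext p
    simp only [hg_def]
    rw [eq_div_iff (ne_of_gt hε0)]
    have : ε ^ (p.1 + 1) * ε ^ (p.2 + 1) = ε ^ (p.1 + p.2 + 1) * ε := by
      rw [← pow_add, ← pow_succ]; congr 1; omega
    calc |halfChoose (p.1 + 1)| * |halfChoose (p.2 + 1)| * ε ^ (p.1 + p.2 + 1) * ε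
        = |halfChoose (p.1 + 1)| * |halfChoose (p.2 + 1)| * (ε ^ (p.1 + p.2 + 1) * ε) := by ring
      _ = |halfChoose (p.1 + 1)| * |halfChoose (p.2 + 1)| * (ε ^ (p.1 + 1) * ε ^ (p.2 + 1)) := by
          rw [this]
      _ = |halfChoose (p.1 + 1)| * ε ^ (p.1 + 1) * (|halfChoose (p.2 + 1)| * ε ^ (p.2 + 1)) := by
          ring
  have hval : f * f / ε = (1 - s) ^ 2 / ε := by rw [hfs]; ring_nf
  constructor
  · rw [hfun]
    rw [← hval]
    exact hdiv
  · rw [div_le_iff₀ hε0]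
    nlinarith [mul_nonneg (mul_nonneg hs0 (sq_nonneg (1 - s))) (by linarith : (0:ℝ) ≤ s + 2)]
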